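/- Let 𝒜 be an admissible Banach A-valued function algebra that has property 𝒫 (every character τ of 𝒜 satisfies τ((φ∘f)·1) = τ(f), where φ = τ|_A). Then its uniform closure 𝒜̄ in C(X,A) also has property 𝒫. -/

import Mathlib

open WeakDual

variable {X : Type*} [TopologicalSpace X] [CompactSpace X] [T2Space X] [Nonempty X]
variable {A : Type*} [NormedCommRing A] [NormedAlgebra ℂ A] [CompleteSpace A] [Nontrivial A]
variable {B : Type*} [NormedCommRing B] [NormedAlgebra ℂ B] [CompleteSpace B]

lemma stmt16_norm_const (a : A) : ‖ContinuousMap.const X a‖ = ‖a‖ := by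
  apply le_antisymm
  · exact (ContinuousMap.norm_le _ (norm_nonneg a)).mpr (fun x => le_refl _)
  · obtain ⟨x⟩ := (inferInstance : Nonempty X)
    exact ContinuousMap.norm_coe_le_norm (ContinuousMap.const X a) x

/-- The embedding of scalar-valued continuous functions into `A`-valued ones,
`g ↦ g·𝟏`. -/
noncomputable def scalHom (X A : Type*) [TopologicalSpace X] [NormedCommRing A]
    [NormedAlgebra ℂ A] : C(X, ℂ) →ₐ[ℂ] C(X, A) :=
  AlgHom.compLeftContinuous ℂ (Algebra.ofId ℂ A) (continuous_algebraMap ℂ A)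

/-- The scalar subalgebra `𝔄 = 𝒜 ∩ C(X)`, realized inside `C(X, ℂ)`: those scalar
functions `g` with `g·𝟏 ∈ 𝒜`. -/
noncomputable def scalarSub (ι : B →ₐ[ℂ] C(X, A)) : Subalgebra ℂ C(X, ℂ) :=
  Subalgebra.comap (scalHom X A) (AlgHom.range ι)

/-- If 𝒜 has property 𝒫 (every character τ satisfies τ((φ∘f)·𝟏) = τ(f) where
φ = τ|_A), then its uniform closure 𝒜̄ in C(X,A) also has property 𝒫. -/
theorem stmt16
(ι : B →ₐ[ℂ] C(X, A)) (hinj : Function.Injective ι)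
    (κ : A →ₐ[ℂ] B) (hκ : ∀ a : A, ι (κ a) = ContinuousMap.const X a)
    (hκnorm : ∃ c₁ > (0:ℝ), ∃ c₂ > (0:ℝ), ∀ a : A, c₁ * ‖a‖ ≤ ‖κ a‖ ∧ ‖κ a‖ ≤ c₂ * ‖a‖)
    (hdom : ∀ f : B, ‖ι f‖ ≤ ‖f‖)
    (hsep : ∀ x y : X, x ≠ y → ∀ M : Ideal A, M.IsMaximal → ∃ f : B, ι f x - ι f y ∉ M)
    (hss : Ideal.jacobson (⊥ : Ideal A) = ⊥)
    (hadm : ∀ (f : B) (φ : A →ₐ[ℂ] ℂ), ∃ g : B, ∀ x : X, ι g x = algebraMap ℂ A (φ (ι f x)))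
    (hP : ∀ (τ : B →ₐ[ℂ] ℂ) (f g : B),
      (∀ x : X, ι g x = algebraMap ℂ A (τ (κ (ι f x)))) → τ g = τ f) :
    ∀ (σ : ↥((AlgHom.range ι).topologicalClosure) →ₐ[ℂ] ℂ)
      (f g : ↥((AlgHom.range ι).topologicalClosure)),
      (∀ x : X, (g : C(X, A)) x = algebraMap ℂ A
        (σ ⟨ContinuousMap.const X ((f : C(X, A)) x),
          (AlgHom.range ι).le_topologicalClosure ⟨κ ((f : C(X, A)) x), hκ _⟩⟩)) →
      σ g = σ f := by
  intro σ f g hg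
  haveI : CompleteSpace ((AlgHom.range ι).topologicalClosure : Subalgebra ℂ C(X, A)) :=
    (Subalgebra.isClosed_topologicalClosure _).completeSpace_coe
  have hmem : ∀ b : B, ι b ∈ (AlgHom.range ι).topologicalClosure :=
    fun b => (AlgHom.range ι).le_topologicalClosure ⟨b, rfl⟩
  let e : B →ₐ[ℂ] ((AlgHom.range ι).topologicalClosure : Subalgebra ℂ C(X, A)) :=
    ι.codRestrict _ hmem
  let τ : B →ₐ[ℂ] ℂ := σ.comp e
  let φ : A →ₐ[ℂ] ℂ := τ.comp κ
  set K : ℝ := ‖(1 : C(X, A))‖ with hK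
  have hK0 : 0 ≤ K := norm_nonneg _
  have hσ : ∀ h : ((AlgHom.range ι).topologicalClosure : Subalgebra ℂ C(X, A)),
      ‖σ h‖ ≤ ‖(h : C(X, A))‖ * K :=
    fun h => AlgHom.norm_apply_le_self_mul_norm_one σ h
  have hφb : ∀ a : A, ‖φ a‖ ≤ ‖a‖ * K := by
    intro a
    have h2 : ((e (κ a)) : C(X, A)) = ι (κ a) := rfl
    calc ‖φ a‖ ≤ ‖((e (κ a)) : C(X, A))‖ * K := hσ _
      _ = ‖a‖ * K := by rw [h2, hκ a, stmt16_norm_const]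
  have hgx : ∀ x : X, (g : C(X, A)) x = algebraMap ℂ A (φ ((f : C(X, A)) x)) := by
    intro x
    rw [hg x]
    congr 1
    have h3 : (⟨ContinuousMap.const X ((f : C(X, A)) x),
        (AlgHom.range ι).le_topologicalClosure ⟨κ ((f : C(X, A)) x), hκ _⟩⟩ :
          ((AlgHom.range ι).topologicalClosure : Subalgebra ℂ C(X, A)))
        = e (κ ((f : C(X, A)) x)) := by
      apply Subtype.ext
      exact (hκ _).symm
    rw [h3]
    rfl
  have key : ∀ ε > (0:ℝ), ‖σ g - σ f‖ ≤ ε * (K * (K * ‖(1:A)‖) + K) := by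
    intro ε hε
    obtain ⟨w, hwS, hw⟩ := Metric.mem_closure_iff.mp f.2 ε hε
    obtain ⟨b, rfl⟩ := hwS
    obtain ⟨c, hc⟩ := hadm b φ
    have hPc : τ c = τ b := hP τ b c (fun x => by rw [hc x]; rfl)
    have hdistf : ‖((f : C(X, A)) - ι b)‖ ≤ ε := by
      rw [← dist_eq_norm]
      exact le_of_lt hw
    have hdistg : ‖((g : C(X, A)) - ι c)‖ ≤ ε * (K * ‖(1:A)‖) := by
      apply (ContinuousMap.norm_le _ (by positivity)).mpr
      intro x
      rw [ContinuousMap.sub_apply, hgx x, hc x, ← map_sub, ← map_sub]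
      calc ‖algebraMap ℂ A (φ ((f : C(X, A)) x - ι b x))‖
          ≤ ‖φ ((f : C(X, A)) x - ι b x)‖ * ‖(1:A)‖ := by
            rw [Algebra.algebraMap_eq_smul_one]
            exact norm_smul_le _ _
        _ ≤ (‖(f : C(X, A)) x - ι b x‖ * K) * ‖(1:A)‖ := by
            gcongr; exact hφb _
        _ ≤ (‖((f : C(X, A)) - ι b)‖ * K) * ‖(1:A)‖ := by
            gcongr
            simpa using ContinuousMap.norm_coe_le_norm ((f : C(X, A)) - ι b) x
        _ ≤ (ε * K) * ‖(1:A)‖ := by gcongr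
        _ = ε * (K * ‖(1:A)‖) := by ring
    have h1 : σ g - σ f = σ (g - e c) + (σ (e b) - σ f) := by
      have hbc : σ (e c) = σ (e b) := hPc
      rw [map_sub, hbc]
      ring
    have h2 : ‖σ (g - e c)‖ ≤ (ε * (K * ‖(1:A)‖)) * K := by
      calc ‖σ (g - e c)‖ ≤ ‖((g - e c : ((AlgHom.range ι).topologicalClosure :
            Subalgebra ℂ C(X, A))) : C(X, A))‖ * K := hσ _
        _ = ‖((g : C(X, A)) - ι c)‖ * K := rfl
        _ ≤ (ε * (K * ‖(1:A)‖)) * K := by gcongr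
    have h3 : ‖σ (e b) - σ f‖ ≤ ε * K := by
      rw [← map_sub]
      calc ‖σ (e b - f)‖ ≤ ‖((e b - f : ((AlgHom.range ι).topologicalClosure :
            Subalgebra ℂ C(X, A))) : C(X, A))‖ * K := hσ _
        _ = ‖(ι b - (f : C(X, A)))‖ * K := rfl
        _ = ‖((f : C(X, A)) - ι b)‖ * K := by rw [norm_sub_rev]
        _ ≤ ε * K := by gcongr
    calc ‖σ g - σ f‖ ≤ ‖σ (g - e c)‖ + ‖σ (e b) - σ f‖ := h1 ▸ norm_add_le _ _
      _ ≤ (ε * (K * ‖(1:A)‖)) * K + ε * K := add_le_add h2 h3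
      _ = ε * (K * (K * ‖(1:A)‖) + K) := by ring
  have hz : ‖σ g - σ f‖ ≤ 0 := by
    by_contra h
    push_neg at h
    set C := K * (K * ‖(1:A)‖) + K with hC
    have hC0 : 0 < C := by
      have h1 := key 1 one_pos
      rw [one_mul] at h1
      nlinarith [norm_nonneg (σ g - σ f)]
    have h2 := key (‖σ g - σ f‖ / (2 * C)) (by positivity)
    have h3 : ‖σ g - σ f‖ / (2 * C) * C = ‖σ g - σ f‖ / 2 := by
      field_simp
    rw [h3] at h2
    linarith
  have := le_antisymm hz (norm_nonneg _)
  rwa [norm_sub_eq_zero_iff] at this
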